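/- (Minimality of the Loynes solution.) If U : Ω → [0,∞) is a measurable random variable satisfying U ∘ θ = ψ(U, ·) P-a.s., then M_∞ ≤ U P-a.s.; in particular M_∞ is the minimal nonnegative solution of the stationary equation Y ∘ θ = ψ(Y, ·). -/
import Mathlib


open MeasureTheory Filter

noncomputable section

variable {Ω : Type*}

/-- ψ(y, ω) = max( max( y + V ω, σ ω + D ω + V ω ) − τ ω, 0 ). -/
def psi (σ D V τ : Ω → ℝ) (y : ℝ) (ω : Ω) : ℝ :=
  max (max (y + V ω) (σ ω + D ω + V ω) - τ ω) 0

/-- S_j(ω) = σ(θ^{-j}ω) + D(θ^{-j}ω) + Σ_{i=1}^{j} V(θ^{-i}ω) − Σ_{i=1}^{j} τ(θ^{-i}ω),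
where `θi` denotes the inverse of `θ`. -/
def Sj (θi : Ω → Ω) (σ D V τ : Ω → ℝ) (j : ℕ) (ω : Ω) : ℝ :=
  σ (θi^[j] ω) + D (θi^[j] ω)
    + ∑ i ∈ Finset.Icc 1 j, V (θi^[i] ω)
    - ∑ i ∈ Finset.Icc 1 j, τ (θi^[i] ω)

/-- Loynes sequence: M_0 = 0 and M_n = max(0, max_{1 ≤ j ≤ n} S_j). -/
def Mn (θi : Ω → Ω) (σ D V τ : Ω → ℝ) (n : ℕ) (ω : Ω) : ℝ :=
  (Finset.Icc 1 n).fold max 0 (fun j => Sj θi σ D V τ j ω)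

/-- M_∞ = max(0, sup_{j ≥ 1} S_j) ∈ [0,∞]. -/
def Minf (θi : Ω → Ω) (σ D V τ : Ω → ℝ) (ω : Ω) : EReal :=
  max 0 (⨆ j : ℕ, ((Sj θi σ D V τ (j + 1) ω : ℝ) : EReal))

lemma sum_shift (θi : Ω → Ω) (f : Ω → ℝ) (j : ℕ) (ω : Ω) :
    ∑ i ∈ Finset.Icc 1 (j + 1), f (θi^[i] ω)
      = f (θi ω) + ∑ i ∈ Finset.Icc 1 j, f (θi^[i] (θi ω)) := by
  have h1 : ∀ n : ℕ, ∀ x : Ω, ∑ i ∈ Finset.Icc 1 n, f (θi^[i] x)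
      = ∑ i ∈ Finset.range n, f (θi^[1 + i] x) := by
    intro n x
    induction n with
    | zero => simp
    | succ n ih =>
      rw [Finset.sum_Icc_succ_top (by omega), Finset.sum_range_succ, ih]
      rw [Nat.add_comm 1 n]
  rw [h1, h1, Finset.sum_range_succ']
  norm_num
  rw [add_comm]
  congr 1

lemma Sj_rec (θi : Ω → Ω) (σ D V τ : Ω → ℝ) (j : ℕ) (ω : Ω) :
    Sj θi σ D V τ (j + 1) ω
      = Sj θi σ D V τ j (θi ω) + V (θi ω) - τ (θi ω) := by
  unfold Sj
  rw [sum_shift θi V j ω, sum_shift θi τ j ω, Function.iterate_succ_apply]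
  ring

/-- minimality of the Loynes solution: if U solves the stationary
equation U ∘ θ = ψ(U, ·) P-a.s., then M_∞ ≤ U P-a.s. -/
theorem Minf_minimal
    [MeasurableSpace Ω] (P : Measure Ω) [IsProbabilityMeasure P]
    (θ : Ω ≃ᵐ Ω) (herg : Ergodic (⇑θ) P)
    (σ D V τ : Ω → ℝ)
    (hσm : Measurable σ) (hDm : Measurable D) (hVm : Measurable V) (hτm : Measurable τ)
    (hσ0 : ∀ ω, 0 ≤ σ ω) (hD0 : ∀ ω, 0 ≤ D ω) (hV0 : ∀ ω, 0 ≤ V ω) (hτ0 : ∀ ω, 0 ≤ τ ω)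
    (hσi : Integrable σ P) (hDi : Integrable D P) (hVi : Integrable V P) (hτi : Integrable τ P)
    (hτpos : ∀ᵐ ω ∂P, 0 < τ ω)
    (U : Ω → ℝ) (hUm : Measurable U) (hU0 : ∀ ω, 0 ≤ U ω)
    (hUsol : ∀ᵐ ω ∂P, U (θ ω) = psi σ D V τ (U ω) ω) :
    ∀ᵐ ω ∂P, Minf (⇑θ.symm) σ D V τ ω ≤ ((U ω : ℝ) : EReal) := by
  have hmp : MeasurePreserving (⇑θ.symm) P P :=
    (MeasurePreserving.symm θ herg.toMeasurePreserving)
  have hA : ∀ᵐ ω ∂P, ∀ i : ℕ,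
      U (θ ((⇑θ.symm)^[i + 1] ω))
        = psi σ D V τ (U ((⇑θ.symm)^[i + 1] ω)) ((⇑θ.symm)^[i + 1] ω) := by
    rw [ae_all_iff]
    intro i
    exact ((hmp.iterate (i + 1)).quasiMeasurePreserving).ae hUsol
  filter_upwards [hA] with ω hω
  -- key inequality at all backward shifts
  have key : ∀ j k : ℕ,
      Sj (⇑θ.symm) σ D V τ (j + 1) ((⇑θ.symm)^[k] ω) ≤ U ((⇑θ.symm)^[k] ω) := by
    intro j
    induction j with
    | zero =>
      intro k
      have hback : θ ((⇑θ.symm)^[k + 1] ω) = (⇑θ.symm)^[k] ω := by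
        rw [Function.iterate_succ_apply', θ.apply_symm_apply]
      have heq := hω k
      rw [hback] at heq
      have hiter : (⇑θ.symm)^[1] ((⇑θ.symm)^[k] ω) = (⇑θ.symm)^[k + 1] ω := by
        rw [← Function.iterate_add_apply, Nat.add_comm]
      unfold Sj
      simp only [Finset.Icc_self, Finset.sum_singleton, hiter]
      rw [heq]
      unfold psi
      set x := (⇑θ.symm)^[k + 1] ω
      have : σ x + D x + V x - τ x ≤ max (max (U x + V x) (σ x + D x + V x) - τ x) 0 :=
        le_max_of_le_left (by gcongr; exact le_max_right _ _)
      linarith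
    | succ j ih =>
      intro k
      have hback : θ ((⇑θ.symm)^[k + 1] ω) = (⇑θ.symm)^[k] ω := by
        rw [Function.iterate_succ_apply', θ.apply_symm_apply]
      have heq := hω k
      rw [hback] at heq
      have hiter : θ.symm ((⇑θ.symm)^[k] ω) = (⇑θ.symm)^[k + 1] ω :=
        (Function.iterate_succ_apply' (⇑θ.symm) k ω).symm
      rw [Sj_rec, hiter]
      have h1 := ih (k + 1)
      rw [heq]
      unfold psi
      set x := (⇑θ.symm)^[k + 1] ω
      have : Sj (⇑θ.symm) σ D V τ (j + 1) x + V x - τ x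
          ≤ max (max (U x + V x) (σ x + D x + V x) - τ x) 0 :=
        le_max_of_le_left (by gcongr; exact le_max_of_le_left (by linarith))
      linarith
  -- conclude
  unfold Minf
  apply max_le
  · exact_mod_cast EReal.coe_nonneg.mpr (hU0 ω)
  · apply iSup_le
    intro j
    have := key j 0
    simp only [Function.iterate_zero, id_eq] at this
    exact_mod_cast this
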